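/- arXiv:1302.3147 — 4 statements merged into one kernel-verified Lean document; each statement's English description precedes it below -/
import Mathlib

section
/- For every real x > 0, one has (1 − e^{−x})^x ≥ 2^{−log 2}, with equality attained at x = log 2; that is, the minimum of the function x ↦ (1 − e^{−x})^x over (0, ∞) equals δ := 2^{−log 2} and is attained at x = log 2. -/
-- entropy-type inequality
lemma phi_nonneg (a : ℝ) (ha : 0 < a) (ha2 : a ≤ 1/2) :
    a * Real.log a ≤ (1 - a) * Real.log (1 - a) := by
  have hb : (0:ℝ) < 1 - a := by linarith
  have h1 : Real.log a - Real.log (1 - a) ≤ a / (1 - a) - 1 := by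
    have := Real.log_le_sub_one_of_pos (show 0 < a / (1-a) from div_pos ha hb)
    rwa [Real.log_div ha.ne' hb.ne'] at this
  have h2 : -Real.log (1 - a) ≤ a / (1 - a) := by
    have := Real.log_le_sub_one_of_pos (inv_pos.2 hb)
    rw [Real.log_inv] at this
    have heq : (1 - a)⁻¹ - 1 = a / (1-a) := by field_simp; ring
    linarith [heq ▸ this]
  have h1' : (Real.log a - Real.log (1 - a)) * (1 - a) ≤ 2*a - 1 := by
    have := mul_le_mul_of_nonneg_right h1 hb.le
    have heq : (a / (1-a) - 1) * (1 - a) = 2*a - 1 := by field_simp; ring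
    linarith [heq ▸ this]
  have h2' : -Real.log (1 - a) * (1 - a) ≤ a := by
    have := mul_le_mul_of_nonneg_right h2 hb.le
    have heq : a / (1-a) * (1 - a) = a := by field_simp
    linarith [heq ▸ this]
  nlinarith [mul_le_mul_of_nonneg_left h1' ha.le,
    mul_le_mul_of_nonneg_left h2' (by linarith : (0:ℝ) ≤ 1 - 2*a)]

lemma hasDerivF (a : ℝ) (ha : 0 < a) (ha2 : a < 1) :
    HasDerivAt (fun x => Real.log x * Real.log (1 - x))
      (a⁻¹ * Real.log (1 - a) + Real.log a * (-(1 - a)⁻¹)) a := by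
  have hb : (0:ℝ) < 1 - a := by linarith
  have hc : HasDerivAt (fun x : ℝ => 1 - x) (-1) a := by
    simpa using (hasDerivAt_id a).const_sub 1
  have h2 : HasDerivAt (fun x => Real.log (1 - x)) (-(1 - a)⁻¹) a := by
    exact ((Real.hasDerivAt_log hb.ne').comp a hc).congr_deriv (by ring)
  exact (Real.hasDerivAt_log ha.ne').mul h2

lemma Fmono : MonotoneOn (fun a => Real.log a * Real.log (1 - a)) (Set.Ioc 0 (1/2:ℝ)) := by
  apply monotoneOn_of_deriv_nonneg (convex_Ioc _ _)
  · intro a ha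
    have h1 : (1:ℝ) - a ≠ 0 := by
      have := ha.1; have := ha.2; intro h; linarith [ha.1, ha.2]
    exact ((Real.continuousAt_log (ne_of_gt ha.1)).mul
      ((Real.continuousAt_log h1).comp
        (continuousAt_const.sub continuousAt_id))).continuousWithinAt
  · intro a ha
    rw [interior_Ioc] at ha
    exact (hasDerivF a ha.1 (by linarith [ha.2])).differentiableAt.differentiableWithinAt
  · intro a ha
    rw [interior_Ioc] at ha
    have ha1 : a < 1 := by linarith [ha.2]
    rw [(hasDerivF a ha.1 ha1).deriv]
    have hb : (0:ℝ) < 1 - a := by linarith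
    have hphi := phi_nonneg a ha.1 ha.2.le
    have key : a⁻¹ * Real.log (1-a) + Real.log a * (-(1-a)⁻¹)
        = ((1-a)*Real.log (1-a) - a*Real.log a) / (a*(1-a)) := by
      rw [eq_div_iff (mul_pos ha.1 hb).ne']
      field_simp [ha.1.ne', hb.ne']
      ring
    rw [key]
    exact div_nonneg (by linarith) (mul_pos ha.1 hb).le

lemma Fhalf : Real.log (1/2 : ℝ) * Real.log (1 - 1/2) = Real.log 2 ^ 2 := by
  have h : Real.log (1/2 : ℝ) = -Real.log 2 := by rw [one_div, Real.log_inv]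
  rw [show (1:ℝ) - 1/2 = 1/2 by norm_num, h]
  ring

lemma Fbound (a : ℝ) (ha : 0 < a) (ha2 : a < 1) :
    Real.log a * Real.log (1 - a) ≤ Real.log 2 ^ 2 := by
  rcases le_or_gt a (1/2) with h | h
  · have := Fmono (Set.mem_Ioc.2 ⟨ha, h⟩) (Set.mem_Ioc.2 ⟨one_half_pos, le_refl _⟩) h
    simp only [] at this
    rwa [Fhalf] at this
  · have hb0 : (0:ℝ) < 1 - a := by linarith
    have hb2 : (1:ℝ) - a ≤ 1/2 := by linarith
    have := Fmono (Set.mem_Ioc.2 ⟨hb0, hb2⟩) (Set.mem_Ioc.2 ⟨one_half_pos, le_refl _⟩) hb2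
    simp only [] at this
    rw [Fhalf] at this
    have heq : (1:ℝ) - (1 - a) = a := by ring
    rw [heq] at this
    linarith [this, mul_comm (Real.log (1-a)) (Real.log a)]


/-- δ = 2^{-log 2} = exp(-(log 2)²), the minimum over x > 0 of (1 - e^{-x})^x. -/
noncomputable def rickerDelta : ℝ := (2 : ℝ) ^ (-Real.log 2)

/-- The minimum of x ↦ (1 - e^{-x})^x over (0,∞) equals δ = 2^{-log 2},
and it is attained at x = log 2. -/
theorem min_of_one_sub_exp_neg_rpow :
    (∀ x : ℝ, 0 < x → rickerDelta ≤ (1 - Real.exp (-x)) ^ x) ∧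
    (1 - Real.exp (-Real.log 2)) ^ Real.log 2 = rickerDelta := by
  constructor
  · intro x hx
    set a := Real.exp (-x) with hadef
    have ha0 : 0 < a := Real.exp_pos _
    have ha1 : a < 1 := Real.exp_lt_one_iff.2 (by linarith)
    have hb : (0:ℝ) < 1 - a := by linarith
    have hloga : Real.log a = -x := Real.log_exp _
    have hF := Fbound a ha0 ha1
    rw [rickerDelta, Real.rpow_def_of_pos two_pos, Real.rpow_def_of_pos hb,
      Real.exp_le_exp]
    nlinarith [hF, sq_nonneg (Real.log 2)]
  · rw [Real.exp_neg, Real.exp_log two_pos, show (1:ℝ) - 2⁻¹ = 2⁻¹ by norm_num,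
      rickerDelta, Real.rpow_neg (le_of_lt two_pos),
      ← Real.inv_rpow (le_of_lt two_pos)]
end

section
/- Let δ = 2^{−log 2} (the minimum over x > 0 of (1 − e^{−x})^x). For all integers m ≥ 1, n ≥ 1 and all reals K > 0, K̃ > 0, a ≥ 0, b ≥ 0, q₀ ∈ [0, 1), q̃₀ ∈ [0, 1), one has (1 − e^{−K(m + b·n)}·(1 − q₀))^m · (1 − e^{−K̃(a·m + n)}·(1 − q̃₀))^n ≥ δ^{1/K + 1/K̃}. -/
-- quartic Taylor bounds for exp on [-1,1]
lemma exp_taylor4 {x : ℝ} (hx : |x| ≤ 1) :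
    |Real.exp x - (1 + x + x^2/2 + x^3/6)| ≤ 5/96 * |x|^4 := by
  have h := Real.exp_bound hx (n := 4) (by norm_num)
  have : (∑ m ∈ Finset.range 4, x ^ m / m.factorial) = 1 + x + x^2/2 + x^3/6 := by
    norm_num [Finset.sum_range_succ, Nat.factorial]
  rw [this] at h
  calc |Real.exp x - (1 + x + x^2/2 + x^3/6)| ≤ |x|^4 * ((4+1)/((4).factorial * 4)) := by
        exact_mod_cast h
    _ = 5/96 * |x|^4 := by norm_num [Nat.factorial]; ring

-- e^x - e^{-x} ≥ 2x for x ∈ [0,1]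
lemma two_mul_le_exp_sub {x : ℝ} (h0 : 0 ≤ x) (h1 : x ≤ 1) :
    2*x ≤ Real.exp x - Real.exp (-x) := by
  have hx : |x| ≤ 1 := by rw [abs_of_nonneg h0]; exact h1
  have hx' : |(-x)| ≤ 1 := by rwa [abs_neg]
  have h := abs_sub_le_iff.1 (exp_taylor4 hx)
  have h' := abs_sub_le_iff.1 (exp_taylor4 hx')
  rw [abs_of_nonneg h0] at h
  rw [abs_neg, abs_of_nonneg h0] at h'
  nlinarith [h.1, h.2, h'.1, h'.2, pow_nonneg h0 3, pow_nonneg h0 4]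

-- log u ≥ (u - 1/u)/2 for u ∈ [2/5, 1]
lemma log_ge_half_sub {u : ℝ} (hl : 2/5 ≤ u) (hu : u ≤ 1) :
    (u - 1/u)/2 ≤ Real.log u := by
  have hu0 : 0 < u := by linarith
  set x : ℝ := -Real.log u with hxdef
  have hx0 : 0 ≤ x := by
    have := Real.log_nonpos (le_of_lt hu0) hu
    simpa [hxdef] using this
  have hx1 : x ≤ 1 := by
    have : Real.exp (-1) ≤ u := by
      have h1 : Real.exp (-1) = 1 / Real.exp 1 := by rw [Real.exp_neg]; ring
      have := Real.exp_one_gt_d9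
      rw [h1]
      rw [div_le_iff₀ (by positivity)]
      nlinarith
    have := Real.log_le_log (Real.exp_pos _) this
    rw [Real.log_exp] at this
    simpa [hxdef] using by linarith
  have hux : u = Real.exp (-x) := by
    rw [hxdef, neg_neg, Real.exp_log hu0]
  have h := two_mul_le_exp_sub hx0 hx1
  have hinv : 1/u = Real.exp x := by
    rw [hux, one_div, ← Real.exp_neg, neg_neg]
  have hlog : Real.log u = -x := by rw [hux, Real.log_exp]
  rw [hinv, hlog, hux] at *
  linarith

-- log v ≥ 2(v-1)/(v+1) for v ∈ [1, 9/5]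
lemma log_ge_pade {v : ℝ} (hl : 1 ≤ v) (hu : v ≤ 9/5) :
    2*(v-1)/(v+1) ≤ Real.log v := by
  have hv0 : 0 < v := by linarith
  set x : ℝ := Real.log v with hxdef
  have hx0 : 0 ≤ x := Real.log_nonneg hl
  have hx1 : x ≤ 1 := by
    have : v ≤ Real.exp 1 := by nlinarith [Real.exp_one_gt_d9]
    have := Real.log_le_log hv0 this
    rwa [Real.log_exp] at this
  have hvx : v = Real.exp x := (Real.exp_log hv0).symm
  have hx : |x| ≤ 1 := by rw [abs_of_nonneg hx0]; exact hx1
  have h := abs_sub_le_iff.1 (exp_taylor4 hx)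
  rw [abs_of_nonneg hx0] at h
  -- need 2(e^x - 1) ≤ x(e^x + 1)
  rw [div_le_iff₀ (by linarith : (0:ℝ) < v + 1)]
  rw [hvx]
  nlinarith [h.1, h.2, pow_nonneg hx0 3, pow_nonneg hx0 4, Real.exp_pos x]

-- core: (-log t)(-log(1-t)) ≤ (log 2)^2 for t ∈ (0, 1/2]
lemma core_half {t : ℝ} (h0 : 0 < t) (h2 : t ≤ 1/2) :
    (-Real.log t) * (-Real.log (1-t)) ≤ (Real.log 2)^2 := by
  have h1t : 0 < 1 - t := by linarith
  have hlt : 0 ≤ -Real.log t := by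
    have := Real.log_nonpos (le_of_lt h0) (by linarith : t ≤ 1); linarith
  have hl1t : 0 ≤ -Real.log (1-t) := by
    have := Real.log_nonpos (le_of_lt h1t) (by linarith : 1 - t ≤ 1); linarith
  have hb2 : -Real.log (1-t) ≤ t/(1-t) := by
    have h := Real.log_le_sub_one_of_pos (show (0:ℝ) < 1/(1-t) by positivity)
    rw [Real.log_div one_ne_zero (ne_of_gt h1t), Real.log_one] at h
    have : 1/(1-t) - 1 = t/(1-t) := by field_simp; ring
    linarith [this ▸ h]
  have hL := Real.log_two_gt_d9
  have hL' := Real.log_two_lt_d9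
  rcases le_or_gt t (1/5) with hc | hc
  · -- small t: -log t ≤ 1/(e t)
    have he := Real.exp_one_gt_d9
    have hept : (0:ℝ) < Real.exp 1 * t := by positivity
    have hbt : -Real.log t ≤ 1/(Real.exp 1 * t) := by
      have h := Real.log_le_sub_one_of_pos (show (0:ℝ) < 1/(Real.exp 1 * t) by positivity)
      rw [Real.log_div one_ne_zero (ne_of_gt hept), Real.log_one,
        Real.log_mul (ne_of_gt (Real.exp_pos 1)) (ne_of_gt h0), Real.log_exp] at h
      linarith
    have hprod : (-Real.log t) * (-Real.log (1-t)) ≤ (1/(Real.exp 1 * t)) * (t/(1-t)) :=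
      mul_le_mul hbt hb2 hl1t (by positivity)
    have heq : (1/(Real.exp 1 * t)) * (t/(1-t)) = 1/(Real.exp 1 * (1-t)) := by
      field_simp
    rw [heq] at hprod
    have : 1/(Real.exp 1 * (1-t)) ≤ (Real.log 2)^2 := by
      rw [div_le_iff₀ (by positivity)]
      have hL2 : (0.48:ℝ) ≤ (Real.log 2)^2 := by nlinarith
      have hE : (2.17:ℝ) ≤ Real.exp 1 * (1-t) := by nlinarith
      nlinarith [mul_le_mul hL2 hE (by norm_num) (by positivity : (0:ℝ) ≤ (Real.log 2)^2)]
    linarith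
  · -- t ∈ [1/5, 1/2]
    have h1 : -Real.log t ≤ Real.log 2 + (1-4*t^2)/(4*t) := by
      have hu := log_ge_half_sub (u := 2*t) (by linarith) (by linarith)
      rw [Real.log_mul two_ne_zero (ne_of_gt h0)] at hu
      have : (2*t - 1/(2*t))/2 = -((1-4*t^2)/(4*t)) := by field_simp; ring
      rw [this] at hu
      linarith
    have h2' : -Real.log (1-t) ≤ Real.log 2 - 2*(1-2*t)/(3-2*t) := by
      have hv := log_ge_pade (v := 2*(1-t)) (by linarith) (by linarith)
      rw [Real.log_mul two_ne_zero (ne_of_gt h1t)] at hv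
      have : 2*(2*(1-t)-1)/(2*(1-t)+1) = 2*(1-2*t)/(3-2*t) := by ring_nf
      rw [this] at hv
      linarith
    have hA : 0 ≤ (1-4*t^2)/(4*t) := by
      apply div_nonneg _ (by linarith); nlinarith
    have hprod : (-Real.log t) * (-Real.log (1-t)) ≤
        (Real.log 2 + (1-4*t^2)/(4*t)) * (Real.log 2 - 2*(1-2*t)/(3-2*t)) :=
      mul_le_mul h1 h2' hl1t (by linarith)
    have key : (Real.log 2 + (1-4*t^2)/(4*t)) * (Real.log 2 - 2*(1-2*t)/(3-2*t)) ≤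
        (Real.log 2)^2 := by
      have h4t : (0:ℝ) < 4*t := by linarith
      have h32 : (0:ℝ) < 3-2*t := by linarith
      rw [← sub_nonneg]
      have expand : (Real.log 2)^2 - (Real.log 2 + (1-4*t^2)/(4*t)) * (Real.log 2 - 2*(1-2*t)/(3-2*t))
          = (2*(1-2*t)/(3-2*t) - (1-4*t^2)/(4*t)) * Real.log 2
            + ((1-4*t^2)/(4*t)) * (2*(1-2*t)/(3-2*t)) := by ring
      rw [expand]
      have hdiff : 2*(1-2*t)/(3-2*t) - (1-4*t^2)/(4*t)
          = -((1-2*t)^2*(3+2*t))/((3-2*t)*(4*t)) := by field_simp; ring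
      have hAB : ((1-4*t^2)/(4*t)) * (2*(1-2*t)/(3-2*t))
          = (1-2*t)^2*(2*(1+2*t))/((3-2*t)*(4*t)) := by field_simp; ring
      rw [hdiff, hAB]
      have hD : (0:ℝ) < (3-2*t)*(4*t) := by positivity
      rw [neg_div, neg_mul, ← sub_eq_neg_add, sub_nonneg, div_mul_eq_mul_div,
        div_le_div_iff₀ hD hD]
      have hscal : (3+2*t)*Real.log 2 ≤ 2*(1+2*t) := by nlinarith
      have hC : (0:ℝ) ≤ (1-2*t)^2 * ((3-2*t)*(4*t)) :=
        mul_nonneg (sq_nonneg _) hD.le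
      nlinarith [mul_le_mul_of_nonneg_right hscal hC]
    linarith

lemma core_full {t : ℝ} (h0 : 0 < t) (h1 : t < 1) :
    (-Real.log t) * (-Real.log (1-t)) ≤ (Real.log 2)^2 := by
  rcases le_or_gt t (1/2) with h | h
  · exact core_half h0 h
  · have := core_half (t := 1-t) (by linarith) (by linarith)
    have e : 1 - (1-t) = t := by ring
    rw [e] at this
    linarith [this, mul_comm (-Real.log (1-t)) (-Real.log t)]

lemma rickerDelta_eq : rickerDelta = Real.exp (-(Real.log 2)^2) := by
  rw [rickerDelta, Real.rpow_def_of_pos two_pos]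
  ring_nf

lemma rickerDelta_pos : 0 < rickerDelta := by
  rw [rickerDelta_eq]; exact Real.exp_pos _

-- δ ≤ (1 - e^{-y})^y for y > 0
lemma delta_le_rpow {y : ℝ} (hy : 0 < y) :
    rickerDelta ≤ (1 - Real.exp (-y)) ^ y := by
  set t := Real.exp (-y) with ht
  have ht0 : 0 < t := Real.exp_pos _
  have ht1 : t < 1 := by
    rw [ht]; exact Real.exp_lt_one_iff.mpr (by linarith)
  have hbase : 0 < 1 - t := by linarith
  have hlogt : Real.log t = -y := by rw [ht, Real.log_exp]
  have hcore := core_full ht0 ht1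
  rw [hlogt] at hcore
  rw [Real.rpow_def_of_pos hbase, rickerDelta_eq]
  apply Real.exp_le_exp.mpr
  nlinarith [hcore]

-- δ^{1/K} ≤ (1 - e^{-(K c)})^m for m ≥ 1, c ≥ m, K > 0
lemma delta_pow_le {K c : ℝ} {m : ℕ} (hK : 0 < K) (hm : 1 ≤ m) (hc : (m:ℝ) ≤ c) :
    rickerDelta ^ (1/K) ≤ (1 - Real.exp (-(K*c))) ^ m := by
  have hm0 : (0:ℝ) < m := by exact_mod_cast hm
  have hKm : 0 < K * m := by positivity
  set B : ℝ := 1 - Real.exp (-(K*(m:ℝ))) with hB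
  have hB0 : 0 < B := by
    have : Real.exp (-(K*(m:ℝ))) < 1 := Real.exp_lt_one_iff.mpr (by linarith)
    simp [hB]; linarith
  have h1 : rickerDelta ≤ B ^ (K*(m:ℝ)) := delta_le_rpow hKm
  have h2 : rickerDelta ^ (1/K) ≤ (B ^ (K*(m:ℝ))) ^ (1/K) :=
    Real.rpow_le_rpow rickerDelta_pos.le h1 (by positivity)
  have h3 : (B ^ (K*(m:ℝ))) ^ (1/K) = B ^ (m:ℕ) := by
    rw [← Real.rpow_natCast B m, ← Real.rpow_mul hB0.le]
    congr 1
    field_simp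
  rw [h3] at h2
  refine h2.trans (pow_le_pow_left₀ hB0.le ?_ m)
  have : Real.exp (-(K*c)) ≤ Real.exp (-(K*(m:ℝ))) :=
    Real.exp_le_exp.mpr (by nlinarith)
  simp [hB]; linarith


/-- The probability that the bivariate stochastic Ricker competition process goes
extinct in one step from the state (m,n) is at least δ^{1/K + 1/K̃}. -/
theorem extinction_prob_bivariate_ge (m n : ℕ) (hm : 1 ≤ m) (hn : 1 ≤ n)
    (K K' a b q0 q0' : ℝ)
    (hK : 0 < K) (hK' : 0 < K') (ha : 0 ≤ a) (hb : 0 ≤ b)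
    (hq0 : 0 ≤ q0) (hq01 : q0 < 1) (hq0' : 0 ≤ q0') (hq01' : q0' < 1) :
    rickerDelta ^ (1 / K + 1 / K') ≤
      (1 - Real.exp (-(K * ((m : ℝ) + b * (n : ℝ)))) * (1 - q0)) ^ m *
      (1 - Real.exp (-(K' * (a * (m : ℝ) + (n : ℝ)))) * (1 - q0')) ^ n := by
  have hm0 : (1:ℝ) ≤ (m:ℝ) := by exact_mod_cast hm
  have hn0 : (1:ℝ) ≤ (n:ℝ) := by exact_mod_cast hn
  have hc1 : (m:ℝ) ≤ (m:ℝ) + b*(n:ℝ) := by nlinarith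
  have hc2 : (n:ℝ) ≤ a*(m:ℝ) + (n:ℝ) := by nlinarith
  -- first factor
  have key1 : rickerDelta ^ (1/K) ≤ (1 - Real.exp (-(K * ((m:ℝ) + b*(n:ℝ)))) * (1 - q0)) ^ m := by
    refine (delta_pow_le hK hm hc1).trans (pow_le_pow_left₀ ?_ ?_ m)
    · have : Real.exp (-(K * ((m:ℝ) + b*(n:ℝ)))) < 1 :=
        Real.exp_lt_one_iff.mpr (by nlinarith)
      linarith
    · nlinarith [Real.exp_pos (-(K * ((m:ℝ) + b*(n:ℝ))))]
  have key2 : rickerDelta ^ (1/K') ≤ (1 - Real.exp (-(K' * (a*(m:ℝ) + (n:ℝ)))) * (1 - q0')) ^ n := by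
    refine (delta_pow_le hK' hn hc2).trans (pow_le_pow_left₀ ?_ ?_ n)
    · have : Real.exp (-(K' * (a*(m:ℝ) + (n:ℝ)))) < 1 :=
        Real.exp_lt_one_iff.mpr (by nlinarith)
      linarith
    · nlinarith [Real.exp_pos (-(K' * (a*(m:ℝ) + (n:ℝ))))]
  have hsplit : rickerDelta ^ (1/K + 1/K') = rickerDelta ^ (1/K) * rickerDelta ^ (1/K') :=
    Real.rpow_add rickerDelta_pos _ _
  rw [hsplit]
  have hb1 : (0:ℝ) ≤ 1 - Real.exp (-(K * ((m:ℝ) + b*(n:ℝ)))) * (1 - q0) := by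
    have h := Real.exp_lt_one_iff.mpr (show -(K * ((m:ℝ) + b*(n:ℝ))) < 0 by nlinarith)
    nlinarith [Real.exp_pos (-(K * ((m:ℝ) + b*(n:ℝ))))]
  exact mul_le_mul key1 key2 (Real.rpow_nonneg rickerDelta_pos.le _)
    (pow_nonneg hb1 m)
end

section
/- For the stochastic Ricker competition chain (U_t, V_t), started from any initial state (m, n) ∈ ℤ_{≥0}², almost surely there exists a time t with U_t = 0 and V_t = 0 (and the chain then stays at (0,0) forever); in particular the chain has a finite lifetime in the open first quadrant almost surely. -/
open Filter

set_option maxHeartbeats 1000000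

/-- The modified offspring distribution: given inhibition exponent c, the litter size has
P(ξ = k) = e^{−c}·q(k) for k ≥ 1 and P(ξ = 0) = 1 − e^{−c}·(1 − q(0)). -/
noncomputable def modPMF (c : ℝ) (q : ℕ → ℝ) : ℕ → ℝ :=
  fun k => if k = 0 then 1 - Real.exp (-c) * (1 - q 0) else Real.exp (-c) * q k

/-- `convPow f m` is the m-fold convolution power of the pmf `f` on ℕ: the distribution of
the sum of m i.i.d. random variables with pmf `f` (the point mass at 0 when m = 0). -/
noncomputable def convPow (f : ℕ → ℝ) : ℕ → ℕ → ℝ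
  | 0, k => if k = 0 then 1 else 0
  | m + 1, k => ∑ i ∈ Finset.range (k + 1), f i * convPow f m (k - i)

/-- The transition probabilities of the stochastic Ricker competition chain (U_t, V_t) on
ℤ_{≥0}²: from (m,n), U_{t+1} is a sum of m i.i.d. litters with pmf `modPMF (K(m+bn)) q` and,
independently, V_{t+1} is a sum of n i.i.d. litters with pmf `modPMF (K̃(am+n)) q̃`
(a coordinate equal to 0 stays 0). -/
noncomputable def rickerKernel (a b K K' : ℝ) (q q' : ℕ → ℝ) :
    ℕ × ℕ → ℕ × ℕ → ℝ :=
  fun p p' =>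
    convPow (modPMF (K * ((p.1 : ℝ) + b * (p.2 : ℝ))) q) p.1 p'.1 *
    convPow (modPMF (K' * (a * (p.1 : ℝ) + (p.2 : ℝ))) q') p.2 p'.2

/-- t-step transition probabilities of a Markov kernel on ℤ_{≥0}². -/
noncomputable def kernelPow (P : ℕ × ℕ → ℕ × ℕ → ℝ) : ℕ → ℕ × ℕ → ℕ × ℕ → ℝ
  | 0, p, p' => if p = p' then 1 else 0
  | t + 1, p, p' => ∑' s : ℕ × ℕ, P p s * kernelPow P t s p'

/-! ### Auxiliary lemmas -/

lemma convPow_nonneg {f : ℕ → ℝ} (hf : ∀ k, 0 ≤ f k) : ∀ m k, 0 ≤ convPow f m k := by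
  intro m
  induction m with
  | zero => intro k; simp only [convPow]; split <;> norm_num
  | succ m ih =>
    intro k
    simp only [convPow]
    exact Finset.sum_nonneg fun i _ => mul_nonneg (hf i) (ih _)

lemma convPow_hasSum {f : ℕ → ℝ} (hf : ∀ k, 0 ≤ f k) (hf1 : HasSum f 1) :
    ∀ m, HasSum (convPow f m) 1 := by
  intro m
  induction m with
  | zero =>
    have : HasSum (fun k : ℕ => if k = 0 then (1 : ℝ) else 0) 1 := hasSum_ite_eq 0 1
    exact this.congr_fun fun k => by simp [convPow]
  | succ m ih =>
    have hfn : Summable fun k => ‖f k‖ := by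
      have : (fun k => ‖f k‖) = f := funext fun k => Real.norm_of_nonneg (hf k)
      rw [this]; exact hf1.summable
    have hgn : Summable fun k => ‖convPow f m k‖ := by
      have : (fun k => ‖convPow f m k‖) = convPow f m :=
        funext fun k => Real.norm_of_nonneg (convPow_nonneg hf m k)
      rw [this]; exact ih.summable
    have h := hasSum_sum_range_mul_of_summable_norm hfn hgn
    rw [hf1.tsum_eq, ih.tsum_eq, one_mul] at h
    exact h.congr_fun fun k => by simp [convPow]

lemma convPow_apply_zero {f : ℕ → ℝ} : ∀ m, convPow f m 0 = f 0 ^ m := by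
  intro m
  induction m with
  | zero => simp [convPow]
  | succ m ih => simp [convPow, ih, pow_succ, mul_comm]

lemma q_zero_le_one {q : ℕ → ℝ} (hq : ∀ k, 0 ≤ q k) (hq1 : HasSum q 1) : q 0 ≤ 1 :=
  le_hasSum hq1 0 fun i _ => hq i

lemma modPMF_nonneg {c : ℝ} (hc : 0 ≤ c) {q : ℕ → ℝ} (hq : ∀ k, 0 ≤ q k)
    (hq1 : HasSum q 1) : ∀ k, 0 ≤ modPMF c q k := by
  intro k
  have h0 : q 0 ≤ 1 := q_zero_le_one hq hq1
  have he : Real.exp (-c) ≤ 1 := Real.exp_le_one_iff.mpr (by linarith)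
  have hep : 0 < Real.exp (-c) := Real.exp_pos _
  unfold modPMF
  split
  · nlinarith [hq 0]
  · exact mul_nonneg hep.le (hq k)

lemma modPMF_hasSum (c : ℝ) {q : ℕ → ℝ} (hq1 : HasSum q 1) : HasSum (modPMF c q) 1 := by
  have h : modPMF c q = fun k =>
      Real.exp (-c) * q k + (if k = 0 then 1 - Real.exp (-c) else 0) := by
    funext k
    unfold modPMF
    split
    · next h => subst h; ring
    · ring
  rw [h]
  have := (hq1.mul_left (Real.exp (-c))).add
    (hasSum_ite_eq 0 (1 - Real.exp (-c)))
  simpa using this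

lemma modPMF_zero_ge {c c' : ℝ} (hcc : c' ≤ c) {q : ℕ → ℝ} (hq : ∀ k, 0 ≤ q k)
    (hq1 : HasSum q 1) : 1 - Real.exp (-c') ≤ modPMF c q 0 := by
  have h0 : q 0 ≤ 1 := q_zero_le_one hq hq1
  have he : Real.exp (-c) ≤ Real.exp (-c') := Real.exp_le_exp.mpr (by linarith)
  have hep : 0 < Real.exp (-c) := Real.exp_pos _
  have hm0 : modPMF c q 0 = 1 - Real.exp (-c) * (1 - q 0) := by simp [modPMF]
  rw [hm0]
  nlinarith [hq 0]

/-- Uniform positive lower bound for `(1 - e^{-Km})^m` over all `m : ℕ`. -/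
lemma exists_uniform_lb {K : ℝ} (hK : 0 < K) :
    ∃ δ : ℝ, 0 < δ ∧ ∀ m : ℕ, δ ≤ (1 - Real.exp (-(K * m))) ^ m := by
  set g : ℕ → ℝ := fun m => (1 - Real.exp (-(K * m))) ^ m with hg
  have hgpos : ∀ m : ℕ, 0 < g m := by
    intro m
    rcases Nat.eq_zero_or_pos m with h | h
    · simp [hg, h]
    · have hm : (0 : ℝ) < K * m := by positivity
      have : Real.exp (-(K * m)) < 1 := by
        rw [Real.exp_lt_one_iff]; linarith
      exact pow_pos (by linarith) m
  -- tail bound : g m ≥ 1 - m * exp (-(K*m)) ≥ 1/2 eventually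
  have htail : Tendsto (fun m : ℕ => (m : ℝ) * Real.exp (-(K * m))) atTop (nhds 0) := by
    have h1 : Tendsto (fun x : ℝ => x ^ 1 * Real.exp (-x)) atTop (nhds 0) :=
      Real.tendsto_pow_mul_exp_neg_atTop_nhds_zero 1
    have h2 : Tendsto (fun m : ℕ => K * (m : ℝ)) atTop atTop :=
      (tendsto_natCast_atTop_atTop (R := ℝ)).const_mul_atTop hK
    have h3 : Tendsto (fun m : ℕ => (K * m) * Real.exp (-(K * m))) atTop (nhds 0) := by
      have := h1.comp h2
      simpa [Function.comp_def] using this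
    have h4 := h3.const_mul (1 / K)
    simp only [mul_zero] at h4
    refine h4.congr fun m => ?_
    field_simp
  have hev : ∀ᶠ m : ℕ in atTop, (m : ℝ) * Real.exp (-(K * m)) ≤ 1 / 2 := by
    have := htail.eventually (eventually_le_nhds (by norm_num : (0:ℝ) < 1/2))
    exact this
  obtain ⟨M, hM⟩ := hev.exists_forall_of_atTop
  have hbern : ∀ m : ℕ, 1 - (m : ℝ) * Real.exp (-(K * m)) ≤ g m := by
    intro m
    have hexple : Real.exp (-(K * (m : ℝ))) ≤ 1 :=
      Real.exp_le_one_iff.mpr (neg_nonpos.mpr (by positivity))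
    have h := one_add_mul_le_pow (a := -Real.exp (-(K * m))) (by linarith) m
    calc 1 - (m : ℝ) * Real.exp (-(K * m))
        = 1 + m * (-Real.exp (-(K * m))) := by ring
      _ ≤ (1 + -Real.exp (-(K * m))) ^ m := h
      _ = g m := by rw [hg]; ring_nf
  set F := (Finset.range (M + 1)).image g with hF
  have hFne : F.Nonempty := ⟨g 0, Finset.mem_image_of_mem g (by simp)⟩
  refine ⟨min (1 / 2) (F.min' hFne), ?_, ?_⟩
  · apply lt_min (by norm_num)
    obtain ⟨m, hm, hgm⟩ := Finset.mem_image.mp (F.min'_mem hFne)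
    rw [← hgm]; exact hgpos m
  · intro m
    rcases le_or_gt M m with h | h
    · refine le_trans (min_le_left _ _) ?_
      have := hM m h
      have := hbern m
      linarith
    · refine le_trans (min_le_right _ _) ?_
      exact F.min'_le (g m) (Finset.mem_image_of_mem g (Finset.mem_range.mpr (by omega)))

/-- The stochastic Ricker competition chain goes extinct almost surely: started from any
state (m,n), the probability of having been absorbed at (0,0) by time t tends to 1 as
t → ∞ (the state (0,0) is absorbing, so this says that almost surely there is a time t
with U_t = 0 and V_t = 0, and the chain then stays at (0,0) forever); in particular the
chain has a finite lifetime in the open first quadrant almost surely. -/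
theorem ricker_chain_extinction_as
    (r r' a b K K' : ℝ) (ha : 0 < a) (hb : 0 < b) (hK : 0 < K) (hK' : 0 < K')
    (q q' : ℕ → ℝ)
    (hq : ∀ k, 0 ≤ q k) (hq1 : HasSum q 1)
    (hqmean : HasSum (fun k : ℕ => (k : ℝ) * q k) (Real.exp r))
    (hqvar : ∃ v : ℝ, HasSum (fun k : ℕ => (k : ℝ) ^ 2 * q k) v)
    (hq' : ∀ k, 0 ≤ q' k) (hq1' : HasSum q' 1)
    (hqmean' : HasSum (fun k : ℕ => (k : ℝ) * q' k) (Real.exp r'))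
    (hqvar' : ∃ v : ℝ, HasSum (fun k : ℕ => (k : ℝ) ^ 2 * q' k) v)
    (p0 : ℕ × ℕ) :
    Tendsto (fun t : ℕ => kernelPow (rickerKernel a b K K' q q') t p0 (0, 0))
      atTop (nhds 1) := by
  classical
  set P := rickerKernel a b K K' q q' with hPdef
  -- basic positivity of the exponents
  have hc1 : ∀ p : ℕ × ℕ, 0 ≤ K * ((p.1 : ℝ) + b * (p.2 : ℝ)) := fun p => by positivity
  have hc2 : ∀ p : ℕ × ℕ, 0 ≤ K' * (a * (p.1 : ℝ) + (p.2 : ℝ)) := fun p => by positivity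
  -- nonnegativity of kernel
  have hP0 : ∀ p p', 0 ≤ P p p' := by
    intro p p'
    exact mul_nonneg
      (convPow_nonneg (modPMF_nonneg (hc1 p) hq hq1) _ _)
      (convPow_nonneg (modPMF_nonneg (hc2 p) hq' hq1') _ _)
  -- each row sums to 1
  have hP1 : ∀ p, HasSum (P p) 1 := by
    intro p
    have hF : HasSum (convPow (modPMF (K * ((p.1 : ℝ) + b * (p.2 : ℝ))) q) p.1) 1 :=
      convPow_hasSum (modPMF_nonneg (hc1 p) hq hq1) (modPMF_hasSum _ hq1) p.1
    have hG : HasSum (convPow (modPMF (K' * (a * (p.1 : ℝ) + (p.2 : ℝ))) q') p.2) 1 :=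
      convPow_hasSum (modPMF_nonneg (hc2 p) hq' hq1') (modPMF_hasSum _ hq1') p.2
    have hsummable : Summable (fun x : ℕ × ℕ =>
        convPow (modPMF (K * ((p.1 : ℝ) + b * (p.2 : ℝ))) q) p.1 x.1 *
        convPow (modPMF (K' * (a * (p.1 : ℝ) + (p.2 : ℝ))) q') p.2 x.2) := by
      apply summable_mul_of_summable_norm (R := ℝ)
      · have : (fun k => ‖convPow (modPMF (K * ((p.1 : ℝ) + b * (p.2 : ℝ))) q) p.1 k‖) =
            convPow (modPMF (K * ((p.1 : ℝ) + b * (p.2 : ℝ))) q) p.1 :=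
          funext fun k => Real.norm_of_nonneg (convPow_nonneg (modPMF_nonneg (hc1 p) hq hq1) _ _)
        rw [this]; exact hF.summable
      · have : (fun k => ‖convPow (modPMF (K' * (a * (p.1 : ℝ) + (p.2 : ℝ))) q') p.2 k‖) =
            convPow (modPMF (K' * (a * (p.1 : ℝ) + (p.2 : ℝ))) q') p.2 :=
          funext fun k => Real.norm_of_nonneg (convPow_nonneg (modPMF_nonneg (hc2 p) hq' hq1') _ _)
        rw [this]; exact hG.summable
    have := hF.mul hG hsummable
    rw [one_mul] at this
    exact this
  -- uniform lower bound on the one-step absorption probability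
  obtain ⟨δ₁, hδ₁pos, hδ₁⟩ := exists_uniform_lb hK
  obtain ⟨δ₂, hδ₂pos, hδ₂⟩ := exists_uniform_lb hK'
  set δ : ℝ := min (δ₁ * δ₂) 1 with hδdef
  have hδpos : 0 < δ := lt_min (by positivity) one_pos
  have hδle1 : δ ≤ 1 := min_le_right _ _
  have hPlb : ∀ p, δ ≤ P p (0, 0) := by
    intro p
    have h1 : (1 - Real.exp (-(K * p.1))) ^ p.1 ≤
        convPow (modPMF (K * ((p.1 : ℝ) + b * (p.2 : ℝ))) q) p.1 0 := by
      rw [convPow_apply_zero]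
      apply pow_le_pow_left₀
      · have : Real.exp (-(K * (p.1 : ℝ))) ≤ 1 :=
          Real.exp_le_one_iff.mpr (neg_nonpos.mpr (by positivity))
        linarith
      · refine modPMF_zero_ge ?_ hq hq1
        have h1 : (0:ℝ) ≤ b * p.2 := by positivity
        nlinarith
    have h2 : (1 - Real.exp (-(K' * p.2))) ^ p.2 ≤
        convPow (modPMF (K' * (a * (p.1 : ℝ) + (p.2 : ℝ))) q') p.2 0 := by
      rw [convPow_apply_zero]
      apply pow_le_pow_left₀
      · have : Real.exp (-(K' * (p.2 : ℝ))) ≤ 1 :=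
          Real.exp_le_one_iff.mpr (neg_nonpos.mpr (by positivity))
        linarith
      · refine modPMF_zero_ge ?_ hq' hq1'
        have h1 : (0:ℝ) ≤ a * p.1 := by positivity
        nlinarith
    have hb1 : δ₁ ≤ (1 - Real.exp (-(K * p.1))) ^ p.1 := hδ₁ p.1
    have hb2 : δ₂ ≤ (1 - Real.exp (-(K' * p.2))) ^ p.2 := hδ₂ p.2
    have hnn : 0 ≤ (1 - Real.exp (-(K' * p.2))) ^ p.2 := le_trans hδ₂pos.le hb2
    calc δ ≤ δ₁ * δ₂ := min_le_left _ _
      _ ≤ ((1 - Real.exp (-(K * p.1))) ^ p.1) * ((1 - Real.exp (-(K' * p.2))) ^ p.2) := by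
          apply mul_le_mul hb1 hb2 hδ₂pos.le (le_trans hδ₁pos.le hb1)
      _ ≤ P p (0, 0) := by
          apply mul_le_mul h1 h2 hnn
          exact convPow_nonneg (modPMF_nonneg (hc1 p) hq hq1) _ _
  have hPub : ∀ p, P p (0, 0) ≤ 1 := fun p => le_hasSum (hP1 p) (0, 0) fun i _ => hP0 p i
  -- (0,0) is absorbing
  have hPabs : ∀ p', P (0, 0) p' = if p' = (0, 0) then 1 else 0 := by
    intro p'
    simp only [hPdef, rickerKernel, convPow, Prod.ext_iff]
    by_cases h1 : p'.1 = 0 <;> by_cases h2 : p'.2 = 0 <;> simp [h1, h2]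
  -- nonnegativity and boundedness of kernelPow
  have hkp0 : ∀ t p p', 0 ≤ kernelPow P t p p' := by
    intro t
    induction t with
    | zero => intro p p'; simp only [kernelPow]; split <;> norm_num
    | succ t ih =>
      intro p p'
      simp only [kernelPow]
      exact tsum_nonneg fun s => mul_nonneg (hP0 p s) (ih s p')
  have hkp1 : ∀ t p p', kernelPow P t p p' ≤ 1 := by
    intro t
    induction t with
    | zero => intro p p'; simp only [kernelPow]; split <;> norm_num
    | succ t ih =>
      intro p p'
      simp only [kernelPow]
      have hsum : Summable fun s => P p s * kernelPow P t s p' :=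
        Summable.of_nonneg_of_le (fun s => mul_nonneg (hP0 p s) (hkp0 t s p'))
          (fun s => mul_le_of_le_one_right (hP0 p s) (ih s p')) (hP1 p).summable
      calc ∑' s, P p s * kernelPow P t s p'
          ≤ ∑' s, P p s := Summable.tsum_le_tsum
            (fun s => mul_le_of_le_one_right (hP0 p s) (ih s p')) hsum (hP1 p).summable
        _ = 1 := (hP1 p).tsum_eq
  -- (0,0) stays absorbed
  have hkabs : ∀ t, kernelPow P t (0, 0) (0, 0) = 1 := by
    intro t
    induction t with
    | zero => simp [kernelPow]
    | succ t ih =>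
      simp only [kernelPow]
      have h : (fun s => P (0, 0) s * kernelPow P t s (0, 0)) =
          fun s => if s = ((0 : ℕ), (0 : ℕ)) then kernelPow P t (0, 0) (0, 0) else 0 := by
        funext s
        rw [hPabs s]
        split_ifs with h
        · subst h; ring
        · ring
      rw [h, tsum_ite_eq, ih]
  -- main induction : kernelPow P t p (0,0) ≥ 1 - (1-δ)^t
  have hmain : ∀ t p, 1 - (1 - δ) ^ t ≤ kernelPow P t p (0, 0) := by
    intro t
    induction t with
    | zero => intro p; simpa using hkp0 0 p (0, 0)
    | succ t ih =>
      intro p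
      have hsum : Summable fun s => P p s * kernelPow P t s (0, 0) :=
        Summable.of_nonneg_of_le (fun s => mul_nonneg (hP0 p s) (hkp0 t s _))
          (fun s => mul_le_of_le_one_right (hP0 p s) (hkp1 t s _)) (hP1 p).summable
      have hsplit := Summable.tsum_eq_add_tsum_ite hsum ((0, 0) : ℕ × ℕ)
      -- the "other states" mass
      have hrest : ∑' s : ℕ × ℕ, (if s = ((0:ℕ), (0:ℕ)) then 0 else P p s) = 1 - P p (0, 0) := by
        have := Summable.tsum_eq_add_tsum_ite (hP1 p).summable ((0, 0) : ℕ × ℕ)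
        rw [(hP1 p).tsum_eq] at this
        linarith
      set c : ℝ := 1 - (1 - δ) ^ t with hc
      have hc0 : 0 ≤ c := by
        have : (1 - δ) ^ t ≤ 1 := pow_le_one₀ (by linarith) (by linarith)
        simp only [hc]; linarith
      have hc1' : c ≤ 1 := by
        have : 0 ≤ (1 - δ) ^ t := pow_nonneg (by linarith) t
        simp only [hc]; linarith
      have hle : ∑' s : ℕ × ℕ, (if s = ((0:ℕ), (0:ℕ)) then 0 else P p s) * c ≤
          ∑' s : ℕ × ℕ, (if s = ((0:ℕ), (0:ℕ)) then 0 else P p s * kernelPow P t s (0, 0)) := by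
        apply Summable.tsum_le_tsum
        · intro s
          split_ifs with h
          · simp
          · exact mul_le_mul_of_nonneg_left (ih s) (hP0 p s)
        · refine Summable.of_nonneg_of_le (fun s => ?_) (fun s => ?_) (hP1 p).summable
          · split_ifs with h
            · simp
            · exact mul_nonneg (hP0 p s) hc0
          · split_ifs with h
            · simpa using hP0 p s
            · exact mul_le_of_le_one_right (hP0 p s) hc1'
        · refine Summable.of_nonneg_of_le (fun s => ?_) (fun s => ?_) (hP1 p).summable
          · split_ifs with h
            · exact le_rfl
            · exact mul_nonneg (hP0 p s) (hkp0 t s _)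
          · split_ifs with h
            · exact hP0 p s
            · exact mul_le_of_le_one_right (hP0 p s) (hkp1 t s _)
      have htsum_mul : ∑' s : ℕ × ℕ, (if s = ((0:ℕ), (0:ℕ)) then 0 else P p s) * c
          = c * (1 - P p (0, 0)) := by
        rw [tsum_mul_right, hrest, mul_comm]
      show 1 - (1 - δ) ^ (t + 1) ≤ ∑' s : ℕ × ℕ, P p s * kernelPow P t s (0, 0)
      rw [hsplit, hkabs t, mul_one]
      have hfinal : ∑' s : ℕ × ℕ,
          (if s = ((0:ℕ), (0:ℕ)) then 0 else P p s * kernelPow P t s (0, 0)) ≥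
          c * (1 - P p (0, 0)) := by
        rw [← htsum_mul]; exact hle
      have hπlb := hPlb p
      have hπub := hPub p
      have hpt : 0 ≤ (1 - δ) ^ t := pow_nonneg (by linarith) t
      have : 1 - (1 - δ) ^ (t + 1) ≤ P p (0, 0) + c * (1 - P p (0, 0)) := by
        rw [pow_succ, hc]
        nlinarith
      linarith
  -- squeeze
  have hlow : Tendsto (fun t : ℕ => 1 - (1 - δ) ^ t) atTop (nhds 1) := by
    have h : Tendsto (fun t : ℕ => (1 - δ) ^ t) atTop (nhds 0) :=
      tendsto_pow_atTop_nhds_zero_of_lt_one (by linarith) (by linarith)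
    have := (tendsto_const_nhds (x := (1:ℝ)) (f := atTop (α := ℕ))).sub h
    simpa using this
  exact tendsto_of_tendsto_of_tendsto_of_le_of_le hlow tendsto_const_nhds
    (fun t => hmain t p0) (fun t => hkp1 t p0 (0, 0))
end

section
/- Let r > 0, K > 0 and x₀ > 0, and define the one-dimensional Ricker orbit by x_{t+1} = x_t·e^{r − K·x_t} for t = 0, 1, 2, …. Then the arithmetic averages converge: (1/n)·Σ_{t=0}^{n−1} x_t → r/K as n → ∞. -/
open Filter

/-- For the one-dimensional Ricker model x_{t+1} = x_t e^{r - K x_t} with r, K > 0 and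
x₀ > 0, the arithmetic averages (1/n)·Σ_{t<n} x_t always converge to r/K. -/
theorem ricker_averages_tendsto (r K : ℝ) (hr : 0 < r) (hK : 0 < K)
    (x : ℕ → ℝ) (hx0 : 0 < x 0)
    (hrec : ∀ t : ℕ, x (t + 1) = x t * Real.exp (r - K * x t)) :
    Tendsto (fun n : ℕ => (∑ t ∈ Finset.range n, x t) / (n : ℝ)) atTop
      (nhds (r / K)) := by
  have hpos : ∀ t, 0 < x t := by
    intro t
    induction t with
    | zero => exact hx0
    | succ n ih => rw [hrec n]; positivity
  set M : ℝ := max (x 0) (Real.exp (r - 1) / K) with hMdef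
  have hMpos : 0 < M := lt_max_of_lt_left hx0
  have hM : ∀ t, x t ≤ M := by
    intro t
    cases t with
    | zero => exact le_max_left _ _
    | succ n =>
      refine le_trans ?_ (le_max_right _ _)
      rw [hrec n]
      have h0 : K * x n ≤ Real.exp (K * x n - 1) := by
        have := Real.add_one_le_exp (K * x n - 1); linarith
      calc x n * Real.exp (r - K * x n) = Real.exp (r - K * x n) * x n := mul_comm _ _
        _ ≤ Real.exp (r - K * x n) * (Real.exp (K * x n - 1) / K) := by
            apply mul_le_mul_of_nonneg_left _ (Real.exp_pos _).le
            rw [le_div_iff₀ hK]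
            nlinarith
        _ = Real.exp (r - 1) / K := by
            rw [mul_div_assoc', ← Real.exp_add]; ring_nf
  set m : ℝ := min (x 0) ((r / K) * Real.exp (r - K * M)) with hmdef
  have hmpos : 0 < m := lt_min hx0 (by positivity)
  have hm : ∀ t, m ≤ x t := by
    intro t
    induction t with
    | zero => exact min_le_left _ _
    | succ n ih =>
      rw [hrec n]
      rcases le_or_gt (x n) (r / K) with h | h
      · have hKx : K * x n ≤ r := by
          have := (le_div_iff₀ hK).mp h; nlinarith
        have h1 : 1 ≤ Real.exp (r - K * x n) := Real.one_le_exp (by linarith)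
        calc m ≤ x n := ih
          _ = x n * 1 := (mul_one _).symm
          _ ≤ x n * Real.exp (r - K * x n) :=
              mul_le_mul_of_nonneg_left h1 (hpos n).le
      · calc m ≤ (r / K) * Real.exp (r - K * M) := min_le_right _ _
          _ ≤ x n * Real.exp (r - K * x n) := by
              apply mul_le_mul h.le (Real.exp_le_exp.mpr (by nlinarith [hM n]))
                (Real.exp_pos _).le (hpos n).le
  have hlog : ∀ t, Real.log (x (t + 1)) = Real.log (x t) + (r - K * x t) := by
    intro t
    rw [hrec t, Real.log_mul (hpos t).ne' (Real.exp_ne_zero _), Real.log_exp]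
  have hsum : ∀ n : ℕ, K * ∑ t ∈ Finset.range n, x t
      = n * r + Real.log (x 0) - Real.log (x n) := by
    intro n
    induction n with
    | zero => simp
    | succ n ih =>
      rw [Finset.sum_range_succ, mul_add, ih, hlog n]
      push_cast; ring
  -- the remainder term
  have hC : Tendsto (fun n : ℕ =>
      (Real.log (x 0) - Real.log (x n)) / (K * n)) atTop (nhds 0) := by
    set C : ℝ := (|Real.log (x 0)| + |Real.log m| + |Real.log M|) / K with hCdef
    refine squeeze_zero_norm' ?_ (tendsto_const_div_atTop_nhds_zero_nat C)
    · filter_upwards [eventually_ge_atTop 1] with n hn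
      have hn0 : (0 : ℝ) < n := by exact_mod_cast hn
      have hb1 : Real.log (x n) ≤ Real.log M := Real.log_le_log (hpos n) (hM n)
      have hb2 : Real.log m ≤ Real.log (x n) := Real.log_le_log hmpos (hm n)
      have habs : |Real.log (x 0) - Real.log (x n)|
          ≤ |Real.log (x 0)| + |Real.log m| + |Real.log M| := by
        have h1 := neg_abs_le (Real.log m)
        have h2 := le_abs_self (Real.log (x 0))
        have h3 := le_abs_self (Real.log M)
        have h4 := neg_abs_le (Real.log (x 0))
        have h5 := abs_nonneg (Real.log m)
        have h6 := abs_nonneg (Real.log M)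
        have h7 := abs_nonneg (Real.log (x 0))
        rw [abs_sub_le_iff]
        constructor <;> linarith
      rw [Real.norm_eq_abs, abs_div, abs_of_pos (by positivity : (0:ℝ) < K * n)]
      rw [hCdef, div_div, div_le_div_iff₀ (by positivity) (by positivity)]
      exact mul_le_mul_of_nonneg_right habs (by positivity)
  have heq : ∀ᶠ n : ℕ in atTop,
      r / K + (Real.log (x 0) - Real.log (x n)) / (K * n)
        = (∑ t ∈ Finset.range n, x t) / (n : ℝ) := by
    filter_upwards [eventually_ge_atTop 1] with n hn
    have hn0 : (0 : ℝ) < n := by exact_mod_cast hn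
    have h := hsum n
    have hsn : ∑ t ∈ Finset.range n, x t
        = ((n : ℝ) * r + Real.log (x 0) - Real.log (x n)) / K := by
      rw [eq_div_iff hK.ne']; linarith [h]
    rw [hsn]
    field_simp
    ring
  have := (tendsto_const_nhds (x := r / K) (f := atTop (α := ℕ))).add hC
  rw [add_zero] at this
  exact this.congr' heq
end
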